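/- Let p > 1 and ζ > 3(1 − 1/p). There exists a constant C > 0 such that for all a, b : ℤ³ → [0,∞], the convolution (a⋆b)(k) := ∑_{l∈ℤ³} a(k−l) b(l) satisfies ‖a⋆b‖_{ζ,p} ≤ C ‖a‖_{ζ,p} ‖b‖_{ζ,p}; that is, the weighted space of nonnegative sequences on ℤ³ with norm ‖·‖_{ζ,p} is an algebra under convolution. -/

import Mathlib

open scoped ENNReal

/-- The Japanese bracket `⟨k⟩ = (1 + |k|²)^{1/2}` of a lattice point `k ∈ ℤ³`,
where `|k|` is the Euclidean norm. -/
noncomputable def jap (k : Fin 3 → ℤ) : ℝ := Real.sqrt (1 + ∑ i, ((k i : ℝ)) ^ 2)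

/-- The Japanese bracket, viewed in `[0,∞]`. -/
noncomputable def japE (k : Fin 3 → ℤ) : ℝ≥0∞ := ENNReal.ofReal (jap k)

lemma jap_one_le (k : Fin 3 → ℤ) : 1 ≤ jap k := by
  have h0 : (0:ℝ) ≤ ∑ i, ((k i : ℝ)) ^ 2 := by positivity
  rw [jap, Real.one_le_sqrt]
  linarith

lemma jap_pos (k : Fin 3 → ℤ) : 0 < jap k := lt_of_lt_of_le one_pos (jap_one_le k)

lemma japE_ne_zero (k : Fin 3 → ℤ) : japE k ≠ 0 := (ENNReal.ofReal_pos.mpr (jap_pos k)).ne'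

lemma japE_ne_top (k : Fin 3 → ℤ) : japE k ≠ ⊤ := ENNReal.ofReal_ne_top

lemma jap_triangle (u v : Fin 3 → ℤ) : jap (u + v) ≤ jap u + jap v := by
  have hau : 0 ≤ jap u := (jap_pos u).le
  have hbv : 0 ≤ jap v := (jap_pos v).le
  have ha : (jap u) ^ 2 = 1 + ∑ i, ((u i : ℝ)) ^ 2 := Real.sq_sqrt (by positivity)
  have hb : (jap v) ^ 2 = 1 + ∑ i, ((v i : ℝ)) ^ 2 := Real.sq_sqrt (by positivity)
  rw [Fin.sum_univ_three] at ha hb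
  rw [jap]
  have key : 1 + ∑ i, (((u + v) i : ℝ)) ^ 2 ≤ (jap u + jap v) ^ 2 := by
    rw [Fin.sum_univ_three]
    simp only [Pi.add_apply]
    push_cast
    nlinarith [sq_nonneg ((u 0:ℝ)*(v 1) - (u 1)*(v 0)), sq_nonneg ((u 0:ℝ)*(v 2) - (u 2)*(v 0)),
      sq_nonneg ((u 1:ℝ)*(v 2) - (u 2)*(v 1)),
      sq_nonneg (jap u * jap v - ((u 0:ℝ)*(v 0) + (u 1)*(v 1) + (u 2)*(v 2))),
      mul_nonneg hau hbv, sq_nonneg ((u 0:ℝ)*(v 0) + (u 1)*(v 1) + (u 2)*(v 2))]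
  calc Real.sqrt (1 + ∑ i, (((u + v) i : ℝ)) ^ 2) ≤ Real.sqrt ((jap u + jap v)^2) :=
        Real.sqrt_le_sqrt key
    _ = jap u + jap v := Real.sqrt_sq (by positivity)

lemma japE_triangle (k l : Fin 3 → ℤ) : japE k ≤ japE (k - l) + japE l := by
  rw [japE, japE, japE, ← ENNReal.ofReal_add (jap_pos _).le (jap_pos _).le]
  exact ENNReal.ofReal_le_ofReal (by simpa using jap_triangle (k - l) l)


set_option maxHeartbeats 1000000 in
lemma summable_1d {t : ℝ} (ht : 1/2 < t) : Summable (fun n : ℤ => (1 + (n:ℝ)^2) ^ (-t)) := by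
  have hsum : Summable (fun n : ℕ => (1 + (n:ℝ)^2) ^ (-t)) := by
    have h1 : Summable (fun n : ℕ => ((n:ℝ) ^ (2*t))⁻¹) :=
      Real.summable_nat_rpow_inv.mpr (by linarith)
    have h2 : Summable (fun n : ℕ => (((n+1:ℕ):ℝ) ^ (2*t))⁻¹) :=
      (summable_nat_add_iff 1).mpr h1
    apply Summable.of_nonneg_of_le (fun n => by positivity)
      (fun n => ?_) (h2.mul_left ((2:ℝ)^t))
    have hle : ((n:ℝ)+1)^2 / 2 ≤ 1 + (n:ℝ)^2 := by nlinarith [sq_nonneg ((n:ℝ) - 1)]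
    have step1 : (1 + (n:ℝ)^2) ^ (-t) ≤ (((n:ℝ)+1)^2 / 2) ^ (-t) :=
      Real.rpow_le_rpow_of_nonpos (by positivity) hle (by linarith)
    refine step1.trans (le_of_eq ?_)
    rw [Real.div_rpow (by positivity) (by norm_num), Real.rpow_neg (by norm_num : (0:ℝ) ≤ 2),
      div_inv_eq_mul]
    rw [← Real.rpow_natCast ((n:ℝ)+1) 2, ← Real.rpow_mul (by positivity),
      show ((2:ℕ):ℝ) * (-t) = -(2*t) by push_cast; ring, Real.rpow_neg (by positivity)]
    push_cast
    ring
  refine hsum.of_nat_of_neg ?_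
  simpa using hsum

lemma tsum_1d_ne_top {t : ℝ} (ht : 1/2 < t) :
    ∑' n : ℤ, ENNReal.ofReal ((1 + (n:ℝ)^2) ^ (-t)) ≠ ⊤ := by
  rw [← ENNReal.ofReal_tsum_of_nonneg (fun n => by positivity) (summable_1d ht)]
  exact ENNReal.ofReal_ne_top

def eZ3 : (Fin 3 → ℤ) ≃ ℤ × ℤ × ℤ where
  toFun m := (m 0, m 1, m 2)
  invFun p := ![p.1, p.2.1, p.2.2]
  left_inv m := by funext i; fin_cases i <;> rfl
  right_inv p := rfl

lemma jap_rpow_bound {s : ℝ} (hs : 0 < s) (m : Fin 3 → ℤ) :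
    jap m ^ (-s) ≤ ∏ i, (1 + ((m i : ℝ))^2) ^ (-(s/6)) := by
  have hX : (0:ℝ) < 1 + ∑ i, ((m i : ℝ)) ^ 2 := by positivity
  have h1 : jap m ^ (-s) = (1 + ∑ i, ((m i : ℝ)) ^ 2) ^ (-(s/2)) := by
    rw [jap, Real.sqrt_eq_rpow, ← Real.rpow_mul hX.le]
    congr 1; ring
  have h2 : ∏ i, (1 + ((m i : ℝ))^2) ^ (-(s/6)) = (∏ i, (1 + ((m i : ℝ))^2)) ^ (-(s/6)) :=
    Real.finset_prod_rpow Finset.univ (fun i => 1 + ((m i:ℝ))^2) (fun i _ => by positivity) (-(s/6))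
  have hfac : ∏ i, (1 + ((m i : ℝ))^2) ≤ (1 + ∑ i, ((m i : ℝ)) ^ 2) ^ (3:ℕ) := by
    rw [Fin.prod_univ_three, Fin.sum_univ_three]
    set X : ℝ := 1 + ((m 0:ℝ)^2 + (m 1:ℝ)^2 + (m 2:ℝ)^2) with hXdef
    have e0 : (1:ℝ) + (m 0:ℝ)^2 ≤ X := by nlinarith [sq_nonneg (m 1:ℝ), sq_nonneg (m 2:ℝ)]
    have e1 : (1:ℝ) + (m 1:ℝ)^2 ≤ X := by nlinarith [sq_nonneg (m 0:ℝ), sq_nonneg (m 2:ℝ)]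
    have e2 : (1:ℝ) + (m 2:ℝ)^2 ≤ X := by nlinarith [sq_nonneg (m 0:ℝ), sq_nonneg (m 1:ℝ)]
    have p0 : (0:ℝ) < 1 + (m 0:ℝ)^2 := by positivity
    have p1 : (0:ℝ) < 1 + (m 1:ℝ)^2 := by positivity
    have hX0 : (0:ℝ) < X := by positivity
    calc (1 + (m 0:ℝ)^2) * (1 + (m 1:ℝ)^2) * (1 + (m 2:ℝ)^2) ≤ X * X * X := by
          apply mul_le_mul (mul_le_mul e0 e1 p1.le hX0.le) e2 (by positivity) (by positivity)
      _ = X ^ (3:ℕ) := by ring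
  rw [h1, h2]
  have hprodpos : (0:ℝ) < ∏ i, (1 + ((m i : ℝ))^2) := by positivity
  calc (1 + ∑ i, ((m i : ℝ)) ^ 2) ^ (-(s/2))
      = ((1 + ∑ i, ((m i : ℝ)) ^ 2) ^ (3:ℕ)) ^ (-(s/6)) := by
        rw [← Real.rpow_natCast _ 3, ← Real.rpow_mul hX.le]; congr 1; push_cast; ring
    _ ≤ (∏ i, (1 + ((m i : ℝ))^2)) ^ (-(s/6)) :=
        Real.rpow_le_rpow_of_nonpos hprodpos hfac (by linarith)

lemma tsum_japE_rpow_ne_top {s : ℝ} (hs : 3 < s) :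
    ∑' m : Fin 3 → ℤ, japE m ^ (-s) ≠ ⊤ := by
  have hs0 : (0:ℝ) < s := by linarith
  set g : ℤ → ℝ≥0∞ := fun n => ENNReal.ofReal ((1 + (n:ℝ)^2) ^ (-(s/6))) with hg
  have hgt : ∑' n : ℤ, g n ≠ ⊤ := tsum_1d_ne_top (by linarith)
  have hbound : ∀ m : Fin 3 → ℤ, japE m ^ (-s) ≤ ∏ i, g (m i) := by
    intro m
    rw [japE, ENNReal.ofReal_rpow_of_pos (jap_pos m)]
    calc ENNReal.ofReal (jap m ^ (-s)) ≤ ENNReal.ofReal (∏ i, (1 + ((m i : ℝ))^2) ^ (-(s/6))) :=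
          ENNReal.ofReal_le_ofReal (jap_rpow_bound hs0 m)
      _ = ∏ i, g (m i) := by
          rw [ENNReal.ofReal_prod_of_nonneg (fun i _ => by positivity)]
  refine ne_top_of_le_ne_top ?_ (ENNReal.tsum_le_tsum hbound)
  have : ∑' m : Fin 3 → ℤ, ∏ i, g (m i) = (∑' n, g n) * ((∑' n, g n) * (∑' n, g n)) := by
    rw [← eZ3.symm.tsum_eq (fun m => ∏ i, g (m i))]
    have : ∀ p : ℤ × ℤ × ℤ, (∏ i, g (eZ3.symm p i)) = g p.1 * (g p.2.1 * g p.2.2) := by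
      intro p; rw [Fin.prod_univ_three]; simp [eZ3, mul_assoc]; rfl
    rw [tsum_congr this, ENNReal.tsum_prod']
    simp_rw [ENNReal.tsum_mul_left, ENNReal.tsum_prod', ENNReal.tsum_mul_left,
      ENNReal.tsum_mul_right]
  rw [this]
  exact ENNReal.mul_ne_top hgt (ENNReal.mul_ne_top hgt hgt)


/-- The weighted norm `‖a‖_{ζ,p} = (∑_{k∈ℤ³} ⟨k⟩^{ζp} a(k)^p)^{1/p}`, possibly `+∞`. -/
noncomputable def wnorm (ζ p : ℝ) (a : (Fin 3 → ℤ) → ℝ≥0∞) : ℝ≥0∞ :=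
  (∑' k, japE k ^ (ζ * p) * a k ^ p) ^ (1 / p)

/-- The convolution `(a ⋆ b)(k) = ∑_{l∈ℤ³} a(k-l) b(l)` of `a, b : ℤ³ → [0,∞]`. -/
noncomputable def conv (a b : (Fin 3 → ℤ) → ℝ≥0∞) (k : Fin 3 → ℤ) : ℝ≥0∞ :=
  ∑' l, a (k - l) * b l

open MeasureTheory in
lemma tsum_holder {p q : ℝ} (hpq : p.HolderConjugate q) (F G : (Fin 3 → ℤ) → ℝ≥0∞) :
    ∑' l, F l * G l ≤ (∑' l, F l ^ p) ^ (1/p) * (∑' l, G l ^ q) ^ (1/q) := by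
  have h := ENNReal.lintegral_mul_le_Lp_mul_Lq (Measure.count (α := Fin 3 → ℤ)) hpq
    (measurable_of_countable F).aemeasurable (measurable_of_countable G).aemeasurable
  simpa [lintegral_count] using h

lemma japE_rpow_ne_zero (k : Fin 3 → ℤ) (s : ℝ) : japE k ^ s ≠ 0 :=
  (ENNReal.rpow_pos (lt_of_le_of_ne zero_le (japE_ne_zero k).symm) (japE_ne_top k)).ne'

lemma japE_rpow_ne_top (k : Fin 3 → ℤ) {s : ℝ} (hs : 0 ≤ s) : japE k ^ s ≠ ⊤ :=
  ENNReal.rpow_ne_top_of_nonneg hs (japE_ne_top k)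


/-- Let `p > 1` and `ζ > 3(1 - 1/p)`.  There is a constant `C > 0` such that for all
`a, b : ℤ³ → [0,∞]`, `‖a ⋆ b‖_{ζ,p} ≤ C ‖a‖_{ζ,p} ‖b‖_{ζ,p}`: the weighted space of
nonnegative sequences on `ℤ³` is an algebra under convolution. -/

theorem stmt4 (p ζ : ℝ) (hp : 1 < p) (hζ : 3 * (1 - 1 / p) < ζ) :
    ∃ C : ℝ, 0 < C ∧ ∀ a b : (Fin 3 → ℤ) → ℝ≥0∞,
      wnorm ζ p (conv a b) ≤ ENNReal.ofReal C * wnorm ζ p a * wnorm ζ p b := by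
  have hpq : p.HolderConjugate (p / (p - 1)) := Real.HolderConjugate.conjExponent hp
  set q : ℝ := p / (p - 1) with hqdef
  have hq1 : 1 < q := hpq.symm.lt
  have hq0 : (0:ℝ) < q := by linarith
  have hp0 : (0:ℝ) < p := by linarith
  have hinv : 1 - 1/p = 1/q := by
    have h := hpq.inv_add_inv_eq_one
    rw [one_div, one_div]; linarith [h]
  have hζq : 3 * (1/q) < ζ := by rw [← hinv]; exact hζ
  have hζpos : 0 < ζ := lt_trans (by positivity) hζq
  set s : ℝ := ζ * q with hsdef
  have hs3 : 3 < s := by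
    have h := mul_lt_mul_of_pos_right hζq hq0
    rwa [mul_assoc, one_div, inv_mul_cancel₀ hq0.ne', mul_one] at h
  have hs1 : 1 ≤ s := by linarith
  have hs0 : (0:ℝ) ≤ s := by linarith
  set S : ℝ≥0∞ := ∑' m : Fin 3 → ℤ, japE m ^ (-s) with hSdef
  have hS : S ≠ ⊤ := tsum_japE_rpow_ne_top hs3
  set T : ℝ≥0∞ := (2:ℝ≥0∞) ^ (s - 1) * (S + S) with hTdef
  have hT : T ≠ ⊤ := by
    refine ENNReal.mul_ne_top ?_ (by simp [ENNReal.add_ne_top, hS])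
    exact ENNReal.rpow_ne_top_of_nonneg (by linarith) (by norm_num)
  -- the uniform bound on the Hölder dual factor
  have hgbound : ∀ k : Fin 3 → ℤ,
      ∑' l, (japE k ^ ζ * (japE (k - l) ^ ζ)⁻¹ * (japE l ^ ζ)⁻¹) ^ q ≤ T := by
    intro k
    have hpt : ∀ l : Fin 3 → ℤ,
        (japE k ^ ζ * (japE (k - l) ^ ζ)⁻¹ * (japE l ^ ζ)⁻¹) ^ q
          ≤ (2:ℝ≥0∞) ^ (s - 1) * (japE l ^ (-s) + japE (k - l) ^ (-s)) := by
      intro l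
      set x := japE (k - l)
      set y := japE l
      have hexp : (japE k ^ ζ * (x ^ ζ)⁻¹ * (y ^ ζ)⁻¹) ^ q
          = japE k ^ s * (x ^ s)⁻¹ * (y ^ s)⁻¹ := by
        rw [ENNReal.mul_rpow_of_nonneg _ _ hq0.le, ENNReal.mul_rpow_of_nonneg _ _ hq0.le,
          ENNReal.inv_rpow, ENNReal.inv_rpow, ← ENNReal.rpow_mul, ← ENNReal.rpow_mul,
          ← ENNReal.rpow_mul]
      have hk : japE k ^ s ≤ (2:ℝ≥0∞) ^ (s - 1) * (x ^ s + y ^ s) := by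
        calc japE k ^ s ≤ (x + y) ^ s :=
              ENNReal.rpow_le_rpow (japE_triangle k l) hs0
          _ ≤ (2:ℝ≥0∞) ^ (s - 1) * (x ^ s + y ^ s) :=
              ENNReal.rpow_add_le_mul_rpow_add_rpow x y hs1
      have heq : (x ^ s + y ^ s) * (x ^ s)⁻¹ * (y ^ s)⁻¹ = y ^ (-s) + x ^ (-s) := by
        rw [add_mul, ENNReal.mul_inv_cancel (japE_rpow_ne_zero _ _) (japE_rpow_ne_top _ hs0),
          add_mul, one_mul, mul_right_comm,
          ENNReal.mul_inv_cancel (japE_rpow_ne_zero _ _) (japE_rpow_ne_top _ hs0), one_mul,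
          ENNReal.rpow_neg, ENNReal.rpow_neg]
      calc (japE k ^ ζ * (x ^ ζ)⁻¹ * (y ^ ζ)⁻¹) ^ q
          = japE k ^ s * (x ^ s)⁻¹ * (y ^ s)⁻¹ := hexp
        _ ≤ (2:ℝ≥0∞) ^ (s - 1) * (x ^ s + y ^ s) * (x ^ s)⁻¹ * (y ^ s)⁻¹ := by
            gcongr
        _ = (2:ℝ≥0∞) ^ (s - 1) * ((x ^ s + y ^ s) * (x ^ s)⁻¹ * (y ^ s)⁻¹) := by ring
        _ = (2:ℝ≥0∞) ^ (s - 1) * (y ^ (-s) + x ^ (-s)) := by rw [heq]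
    calc ∑' l, (japE k ^ ζ * (japE (k - l) ^ ζ)⁻¹ * (japE l ^ ζ)⁻¹) ^ q
        ≤ ∑' l, (2:ℝ≥0∞) ^ (s - 1) * (japE l ^ (-s) + japE (k - l) ^ (-s)) :=
          ENNReal.tsum_le_tsum hpt
      _ = (2:ℝ≥0∞) ^ (s - 1) * (S + S) := by
          rw [ENNReal.tsum_mul_left, ENNReal.tsum_add]
          congr 2
          exact ((Equiv.subLeft k).tsum_eq (fun m => japE m ^ (-s)))
  -- the main estimate
  refine ⟨(T ^ (1/q)).toReal + 1, by positivity, fun a b => ?_⟩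
  have hTq : T ^ (1/q) ≠ ⊤ := ENNReal.rpow_ne_top_of_nonneg (by positivity) hT
  have hC : T ^ (1/q) ≤ ENNReal.ofReal ((T ^ (1/q)).toReal + 1) := by
    conv_lhs => rw [← ENNReal.ofReal_toReal hTq]
    exact ENNReal.ofReal_le_ofReal (by linarith)
  set Fa : (Fin 3 → ℤ) → ℝ≥0∞ := fun m => japE m ^ (ζ * p) * a m ^ p with hFa
  set Fb : (Fin 3 → ℤ) → ℝ≥0∞ := fun m => japE m ^ (ζ * p) * b m ^ p with hFb
  -- pointwise (in k) bound
  have hkbound : ∀ k : Fin 3 → ℤ,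
      japE k ^ (ζ * p) * conv a b k ^ p ≤ (∑' l, Fa (k - l) * Fb l) * T ^ (p/q) := by
    intro k
    set F : (Fin 3 → ℤ) → ℝ≥0∞ := fun l => japE (k - l) ^ ζ * a (k - l) * (japE l ^ ζ * b l)
      with hF
    set G : (Fin 3 → ℤ) → ℝ≥0∞ := fun l => japE k ^ ζ * (japE (k - l) ^ ζ)⁻¹ * (japE l ^ ζ)⁻¹
      with hG
    have hsplit : japE k ^ ζ * conv a b k = ∑' l, F l * G l := by
      rw [conv, ← ENNReal.tsum_mul_left]
      refine tsum_congr fun l => ?_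
      have hx : japE (k - l) ^ ζ * (japE (k - l) ^ ζ)⁻¹ = 1 :=
        ENNReal.mul_inv_cancel (japE_rpow_ne_zero _ _) (japE_rpow_ne_top _ hζpos.le)
      have hy : japE l ^ ζ * (japE l ^ ζ)⁻¹ = 1 :=
        ENNReal.mul_inv_cancel (japE_rpow_ne_zero _ _) (japE_rpow_ne_top _ hζpos.le)
      calc japE k ^ ζ * (a (k - l) * b l)
          = (japE (k - l) ^ ζ * (japE (k - l) ^ ζ)⁻¹) * ((japE l ^ ζ * (japE l ^ ζ)⁻¹))
            * (japE k ^ ζ * (a (k - l) * b l)) := by rw [hx, hy]; ring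
        _ = F l * G l := by rw [hF, hG]; ring
    have hFp : ∀ l, F l ^ p = Fa (k - l) * Fb l := by
      intro l
      rw [hF, hFa, hFb]
      simp only
      rw [ENNReal.mul_rpow_of_nonneg _ _ hp0.le, ENNReal.mul_rpow_of_nonneg _ _ hp0.le,
        ENNReal.mul_rpow_of_nonneg _ _ hp0.le, ← ENNReal.rpow_mul, ← ENNReal.rpow_mul]
    have hhold := tsum_holder hpq F G
    have hGT : (∑' l, G l ^ q) ^ (1/q) ≤ T ^ (1/q) :=
      ENNReal.rpow_le_rpow (hgbound k) (by positivity)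
    calc japE k ^ (ζ * p) * conv a b k ^ p
        = (japE k ^ ζ * conv a b k) ^ p := by
          rw [ENNReal.mul_rpow_of_nonneg _ _ hp0.le, ← ENNReal.rpow_mul]
      _ = (∑' l, F l * G l) ^ p := by rw [hsplit]
      _ ≤ ((∑' l, F l ^ p) ^ (1/p) * (∑' l, G l ^ q) ^ (1/q)) ^ p :=
          ENNReal.rpow_le_rpow hhold hp0.le
      _ ≤ ((∑' l, F l ^ p) ^ (1/p) * T ^ (1/q)) ^ p := by
          gcongr
      _ = (∑' l, F l ^ p) * T ^ (p/q) := by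
          rw [ENNReal.mul_rpow_of_nonneg _ _ hp0.le, ← ENNReal.rpow_mul, ← ENNReal.rpow_mul,
            one_div, inv_mul_cancel₀ hp0.ne', ENNReal.rpow_one, one_div, inv_mul_eq_div]
      _ = (∑' l, Fa (k - l) * Fb l) * T ^ (p/q) := by
          rw [tsum_congr hFp]
  -- sum over k, Fubini and translation invariance
  have hsum : ∑' k, japE k ^ (ζ * p) * conv a b k ^ p
      ≤ T ^ (p/q) * ((∑' m, Fa m) * (∑' m, Fb m)) := by
    calc ∑' k, japE k ^ (ζ * p) * conv a b k ^ p
        ≤ ∑' k, (∑' l, Fa (k - l) * Fb l) * T ^ (p/q) := ENNReal.tsum_le_tsum hkbound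
      _ = T ^ (p/q) * ∑' k, ∑' l, Fa (k - l) * Fb l := by
          rw [← ENNReal.tsum_mul_left]; exact tsum_congr fun k => mul_comm _ _
      _ = T ^ (p/q) * ((∑' m, Fa m) * (∑' m, Fb m)) := by
          congr 1
          rw [ENNReal.tsum_comm]
          calc ∑' l, ∑' k, Fa (k - l) * Fb l
              = ∑' l, (∑' k, Fa (k - l)) * Fb l := by
                exact tsum_congr fun l => ENNReal.tsum_mul_right
            _ = ∑' l, (∑' m, Fa m) * Fb l := by
                refine tsum_congr fun l => ?_
                congr 1
                exact (Equiv.subRight l).tsum_eq Fa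
            _ = (∑' m, Fa m) * (∑' m, Fb m) := ENNReal.tsum_mul_left
  -- conclude
  have hfinal : wnorm ζ p (conv a b) ≤ T ^ (1/q) * (wnorm ζ p a * wnorm ζ p b) := by
    rw [wnorm, wnorm, wnorm]
    calc (∑' k, japE k ^ (ζ * p) * conv a b k ^ p) ^ (1/p)
        ≤ (T ^ (p/q) * ((∑' m, Fa m) * (∑' m, Fb m))) ^ (1/p) :=
          ENNReal.rpow_le_rpow hsum (by positivity)
      _ = T ^ (1/q) * ((∑' m, Fa m) ^ (1/p) * (∑' m, Fb m) ^ (1/p)) := by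
          rw [ENNReal.mul_rpow_of_nonneg _ _ (by positivity : (0:ℝ) ≤ 1/p),
            ENNReal.mul_rpow_of_nonneg _ _ (by positivity : (0:ℝ) ≤ 1/p),
            ← ENNReal.rpow_mul]
          congr 2
          field_simp
  calc wnorm ζ p (conv a b) ≤ T ^ (1/q) * (wnorm ζ p a * wnorm ζ p b) := hfinal
    _ ≤ ENNReal.ofReal ((T ^ (1/q)).toReal + 1) * (wnorm ζ p a * wnorm ζ p b) := by gcongr
    _ = ENNReal.ofReal ((T ^ (1/q)).toReal + 1) * wnorm ζ p a * wnorm ζ p b := by ring
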